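/- For every integer n ≥ 4, the number of non-equivalent distinguishing colorings of the path P_n using exactly n − 1 colors equals (n−1)·n!/4, i.e., φ_{n−1}(P_n) = (n−1)·n!/4. -/

import Mathlib

open SimpleGraph

def IsDistinguishing {V : Type*} {k : ℕ} (G : SimpleGraph V) (c : V → Fin k) : Prop :=
  ∀ α : G ≃g G, (∀ v, c (α v) = c v) → ∀ v, α v = v

noncomputable def Phi {V : Type*} (G : SimpleGraph V) (k : ℕ) : ℕ :=
  Nat.card (Quot (fun c₁ c₂ : {c : V → Fin k // IsDistinguishing G c} =>
    ∃ α : G ≃g G, ∀ v, c₁.1 v = c₂.1 (α v)))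

noncomputable def phi {V : Type*} (G : SimpleGraph V) (k : ℕ) : ℕ :=
  Nat.card (Quot (fun c₁ c₂ : {c : V → Fin k // IsDistinguishing G c ∧ Function.Surjective c} =>
    ∃ α : G ≃g G, ∀ v, c₁.1 v = c₂.1 (α v)))

noncomputable def theta {V : Type*} (G : SimpleGraph V) : ℕ :=
  sInf {t | ∀ k, t ≤ k → ∀ c : V → Fin k, Function.Surjective c → IsDistinguishing G c}

def stirling2 : ℕ → ℕ → ℕ
  | 0, 0 => 1
  | 0, _ + 1 => 0
  | _ + 1, 0 => 0
  | n + 1, k + 1 => (k + 1) * stirling2 n (k + 1) + stirling2 n k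

def IsDCPartition {V : Type*} [DecidableEq V] [Fintype V] (G : SimpleGraph V)
    (P : Finpartition (Finset.univ : Finset V)) : Prop :=
  ∀ α : G ≃g G, (∀ p ∈ P.parts, p.image ⇑α = p) → ∀ v, α v = v

def IsDPartition {V : Type*} [DecidableEq V] [Fintype V] (G : SimpleGraph V)
    (P : Finpartition (Finset.univ : Finset V)) : Prop :=
  ∀ α : G ≃g G, P.parts.image (fun p => p.image ⇑α) = P.parts → ∀ v, α v = v

def PartEquiv {V : Type*} [DecidableEq V] [Fintype V] (G : SimpleGraph V)
    (P₁ P₂ : Finpartition (Finset.univ : Finset V)) : Prop :=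
  ∃ α : G ≃g G, P₁.parts.image (fun p => p.image ⇑α) = P₂.parts

noncomputable def psi {V : Type*} [DecidableEq V] [Fintype V] (G : SimpleGraph V) (k : ℕ) : ℕ :=
  Nat.card (Quot (fun P₁ P₂ : {P : Finpartition (Finset.univ : Finset V) //
      IsDCPartition G P ∧ P.parts.card = k} => PartEquiv G P₁.1 P₂.1))

noncomputable def PsiAtMost {V : Type*} [DecidableEq V] [Fintype V] (G : SimpleGraph V) (k : ℕ) : ℕ :=
  Nat.card (Quot (fun P₁ P₂ : {P : Finpartition (Finset.univ : Finset V) //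
      IsDCPartition G P ∧ P.parts.card ≤ k} => PartEquiv G P₁.1 P₂.1))

noncomputable def PiAtMost {V : Type*} [DecidableEq V] [Fintype V] (G : SimpleGraph V) (k : ℕ) : ℕ :=
  Nat.card (Quot (fun P₁ P₂ : {P : Finpartition (Finset.univ : Finset V) //
      P.parts.card ≤ k} => PartEquiv G P₁.1 P₂.1))

noncomputable def XiAtMost {V : Type*} [DecidableEq V] [Fintype V] (G : SimpleGraph V) (k : ℕ) : ℕ :=
  Nat.card (Quot (fun P₁ P₂ : {P : Finpartition (Finset.univ : Finset V) //
      IsDPartition G P ∧ P.parts.card ≤ k} => PartEquiv G P₁.1 P₂.1))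

def kneserGraph2 (n : ℕ) : SimpleGraph {s : Finset (Fin n) // s.card = 2} where
  Adj a b := Disjoint a.1 b.1
  symm := ⟨fun a b h => h.symm⟩
  loopless := by
    refine ⟨?_⟩
    rintro ⟨s, hs⟩ h
    simp only [disjoint_self, Finset.bot_eq_empty] at h
    simp [h] at hs

def lexProd {V W : Type*} (X : SimpleGraph V) (Y : SimpleGraph W) : SimpleGraph (V × W) where
  Adj a b := X.Adj a.1 b.1 ∨ (a.1 = b.1 ∧ Y.Adj a.2 b.2)
  symm := by
    refine ⟨?_⟩
    rintro ⟨x, y⟩ ⟨x', y'⟩ (h | ⟨h, h'⟩)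
    · exact Or.inl h.symm
    · exact Or.inr ⟨h.symm, h'.symm⟩
  loopless := by
    refine ⟨?_⟩
    rintro ⟨x, y⟩ (h | ⟨-, h⟩)
    · exact X.irrefl h
    · exact Y.irrefl h

def IsNaturalAut {V W : Type*} (X : SimpleGraph V) (Y : SimpleGraph W)
    (μ : lexProd X Y ≃g lexProd X Y) : Prop :=
  ∀ x : V, ∃ x' : V, (fun p => μ p) '' ({x} ×ˢ (Set.univ : Set W)) = {x'} ×ˢ (Set.univ : Set W)

noncomputable def distNumber {V : Type*} (G : SimpleGraph V) : ℕ :=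
  sInf {k | ∃ c : V → Fin k, IsDistinguishing G c}


def pgRev (n : ℕ) : pathGraph n ≃g pathGraph n where
  toEquiv := Fin.revPerm
  map_rel_iff' := by
    intro u v
    simp only [Fin.revPerm_apply, pathGraph_adj, Fin.val_rev]
    omega

@[simp] lemma pgRev_apply {n : ℕ} (v : Fin n) : pgRev n v = Fin.rev v := rfl

lemma aut_fix_zero {n : ℕ} (hn : 2 ≤ n) (α : pathGraph n ≃g pathGraph n)
    (h0 : α ⟨0, by omega⟩ = ⟨0, by omega⟩) : ∀ v, α v = v := by
  have key : ∀ k (hk : k < n), α ⟨k, hk⟩ = ⟨k, hk⟩ := by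
    intro k
    induction k using Nat.strong_induction_on with
    | _ k ih =>
      intro hk
      match k, hk with
      | 0, hk => exact h0
      | (m+1), hk =>
        have hm : m < n := by omega
        have hadj : (pathGraph n).Adj (α ⟨m+1, hk⟩) ⟨m, hm⟩ := by
          have := (α.map_adj_iff (v := ⟨m+1, hk⟩) (w := ⟨m, hm⟩)).2
            (by rw [pathGraph_adj]; exact Or.inr rfl)
          rwa [ih m (by omega) hm] at this
        rw [pathGraph_adj] at hadj
        have hadj' : (α ⟨m+1, hk⟩).val + 1 = m ∨ m + 1 = (α ⟨m+1, hk⟩).val := hadj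
        rcases hadj' with h | h
        · have hm1 : m - 1 < n := by omega
          have heq : α ⟨m+1, hk⟩ = α ⟨m-1, hm1⟩ := by
            rw [ih (m-1) (by omega) hm1]
            exact Fin.ext (show (α ⟨m+1, hk⟩).val = m - 1 by omega)
          have := α.toEquiv.injective heq
          have : m + 1 = m - 1 := congrArg Fin.val this
          omega
        · exact Fin.ext (show (α ⟨m+1, hk⟩).val = m + 1 by omega)
  intro v
  have := key v.val v.isLt
  simpa using this

lemma aut_cases {n : ℕ} (hn : 2 ≤ n) (α : pathGraph n ≃g pathGraph n) :
    (∀ v, α v = v) ∨ (∀ v, α v = Fin.rev v) := by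
  set z : Fin n := ⟨0, by omega⟩ with hz
  have hz0 : (α z).val = 0 ∨ (α z).val = n - 1 := by
    by_contra hcon
    push_neg at hcon
    obtain ⟨h1, h2⟩ := hcon
    have hw := (α z).isLt
    have hlo : (α z).val - 1 < n := by omega
    have hhi : (α z).val + 1 < n := by omega
    have ha : (pathGraph n).Adj (⟨(α z).val - 1, hlo⟩ : Fin n) (α z) := by
      rw [pathGraph_adj]; left
      show (α z).val - 1 + 1 = (α z).val; omega
    have hb : (pathGraph n).Adj (⟨(α z).val + 1, hhi⟩ : Fin n) (α z) := by
      rw [pathGraph_adj]; right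
      show (α z).val + 1 = (α z).val + 1; rfl
    -- pull back via α.symm
    have ha' : (pathGraph n).Adj (α.symm ⟨(α z).val - 1, hlo⟩) z := by
      have := α.symm.map_adj_iff.2 ha
      rwa [α.symm_apply_apply] at this
    have hb' : (pathGraph n).Adj (α.symm ⟨(α z).val + 1, hhi⟩) z := by
      have := α.symm.map_adj_iff.2 hb
      rwa [α.symm_apply_apply] at this
    rw [pathGraph_adj] at ha' hb'
    have ha'' : (α.symm ⟨(α z).val - 1, hlo⟩).val = 1 := by
      rcases ha' with h | h
      · exact absurd (show (α.symm _).val + 1 = 0 from h) (by omega)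
      · have : (z.val) + 1 = (α.symm ⟨(α z).val - 1, hlo⟩).val := h
        simpa [hz] using this.symm
    have hb'' : (α.symm ⟨(α z).val + 1, hhi⟩).val = 1 := by
      rcases hb' with h | h
      · exact absurd (show (α.symm _).val + 1 = 0 from h) (by omega)
      · have : (z.val) + 1 = (α.symm ⟨(α z).val + 1, hhi⟩).val := h
        simpa [hz] using this.symm
    have : α.symm ⟨(α z).val - 1, hlo⟩ = α.symm ⟨(α z).val + 1, hhi⟩ :=
      Fin.ext (by omega)
    have := α.symm.toEquiv.injective this
    have : (α z).val - 1 = (α z).val + 1 := congrArg Fin.val this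
    omega
  rcases hz0 with h | h
  · left
    exact aut_fix_zero hn α (Fin.ext h)
  · right
    have hβ : ∀ v, (α.trans (pgRev n)) v = v := by
      apply aut_fix_zero hn
      show Fin.rev (α z) = z
      apply Fin.ext
      rw [Fin.val_rev, h]
      show n - (n - 1 + 1) = 0
      omega
    intro v
    have := hβ v
    have : Fin.rev (α v) = v := this
    have := congrArg Fin.rev this
    rwa [Fin.rev_rev] at this


def coll {n : ℕ} (p : Σ j : Fin n, Fin j.val) (k : Fin n) : Fin (n-1) :=
  ⟨if k.val = p.1.val then p.2.val else if k.val < p.1.val then k.val else k.val - 1, by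
    have h1 := p.1.isLt
    have h2 := p.2.isLt
    have h3 := k.isLt
    split_ifs <;> omega⟩

def sec {n : ℕ} (p : Σ j : Fin n, Fin j.val) (t : Fin (n-1)) : Fin n :=
  if t.val < p.1.val then ⟨t.val, by omega⟩ else ⟨t.val + 1, by omega⟩

lemma coll_val {n : ℕ} (p : Σ j : Fin n, Fin j.val) (k : Fin n) :
    (coll p k).val = if k.val = p.1.val then p.2.val else
      if k.val < p.1.val then k.val else k.val - 1 := rfl

lemma sec_val {n : ℕ} (p : Σ j : Fin n, Fin j.val) (t : Fin (n-1)) :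
    (sec p t).val = if t.val < p.1.val then t.val else t.val + 1 := by
  unfold sec; split_ifs <;> rfl

lemma coll_sec {n : ℕ} (p : Σ j : Fin n, Fin j.val) (t : Fin (n-1)) :
    coll p (sec p t) = t := by
  have h1 := p.1.isLt
  have h2 := p.2.isLt
  have h3 := t.isLt
  apply Fin.ext
  rw [coll_val, sec_val]
  split_ifs <;> omega

lemma sec_coll {n : ℕ} (p : Σ j : Fin n, Fin j.val) (k : Fin n) :
    sec p (coll p k) = if k.val = p.1.val
      then ⟨p.2.val, by have := p.2.isLt; have := p.1.isLt; omega⟩ else k := by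
  have h1 := p.1.isLt
  have h2 := p.2.isLt
  have h3 := k.isLt
  apply Fin.ext
  rw [sec_val, coll_val, apply_ite Fin.val]
  simp only [Fin.val]
  split_ifs <;> omega

lemma coll_surj {n : ℕ} (p : Σ j : Fin n, Fin j.val) : Function.Surjective (coll p) :=
  fun t => ⟨sec p t, coll_sec p t⟩

lemma coll_eq_cases {n : ℕ} (p : Σ j : Fin n, Fin j.val) {a b : Fin n}
    (h : coll p a = coll p b) (hab : a ≠ b) :
    (a.val = p.2.val ∧ b.val = p.1.val) ∨ (a.val = p.1.val ∧ b.val = p.2.val) := by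
  have h' : (coll p a).val = (coll p b).val := congrArg Fin.val h
  have hab' : a.val ≠ b.val := fun hv => hab (Fin.ext hv)
  have h2 := p.2.isLt
  rw [coll_val, coll_val] at h'
  split_ifs at h' <;> omega

def surjMap (n : ℕ) (x : (Σ j : Fin n, Fin j.val) × (Fin (n-1) ≃ Fin (n-1))) :
    {c : Fin n → Fin (n-1) // Function.Surjective c} :=
  ⟨x.2 ∘ coll x.1, x.2.surjective.comp (coll_surj x.1)⟩

lemma surjMap_inj (n : ℕ) : Function.Injective (surjMap n) := by
  rintro ⟨⟨j, i⟩, σ⟩ ⟨⟨j', i'⟩, σ'⟩ h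
  have hfun : ∀ k, σ (coll ⟨j,i⟩ k) = σ' (coll ⟨j',i'⟩ k) :=
    fun k => congrFun (congrArg Subtype.val h) k
  have hii := i.isLt
  have hii' := i'.isLt
  have hiv : (⟨i.val, by omega⟩ : Fin n) ≠ j := by
    intro hc; have := congrArg Fin.val hc; simp at this; omega
  have hcol : coll ⟨j,i⟩ (⟨i.val, by omega⟩ : Fin n) = coll ⟨j,i⟩ j := by
    apply Fin.ext
    rw [coll_val, coll_val]
    simp only [Fin.val]
    split_ifs <;> omega
  have : σ' (coll ⟨j',i'⟩ ⟨i.val, by omega⟩) = σ' (coll ⟨j',i'⟩ j) := by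
    rw [← hfun, ← hfun, hcol]
  have hcol' : coll ⟨j',i'⟩ (⟨i.val, by omega⟩ : Fin n) = coll ⟨j',i'⟩ j :=
    σ'.injective this
  have hcases := coll_eq_cases ⟨j',i'⟩ hcol' hiv
  simp only [Fin.val] at hcases
  have hji : j = j' ∧ i.val = i'.val := by
    rcases hcases with ⟨h1, h2⟩ | ⟨h1, h2⟩
    · exact ⟨Fin.ext h2, h1⟩
    · omega
  obtain ⟨hj, hi⟩ := hji
  subst hj
  have hieq : i = i' := Fin.ext hi
  subst hieq
  have hσ : σ = σ' := by
    apply Equiv.ext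
    intro t
    have ht := hfun (sec ⟨j,i⟩ t)
    rwa [coll_sec] at ht
  rw [hσ]

lemma surjMap_surj (n : ℕ) (hn : 1 ≤ n) : Function.Surjective (surjMap n) := by
  rintro ⟨c, hc⟩
  have hninj : ¬ Function.Injective c := by
    intro hinj
    have := Fintype.card_le_of_injective c hinj
    simp only [Fintype.card_fin] at this
    omega
  rw [Function.not_injective_iff] at hninj
  obtain ⟨a, b, hab, hne⟩ := hninj
  -- wlog a.val < b.val
  wlog hlt : a.val < b.val generalizing a b
  · exact this b a hab.symm hne.symm (by
      rcases Nat.lt_or_ge b.val a.val with h | h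
      · exact h
      · exact absurd (Fin.ext (by omega)) hne)
  set p : Σ j : Fin n, Fin j.val := ⟨b, ⟨a.val, hlt⟩⟩ with hp
  have hcomp : ∀ k, c (sec p (coll p k)) = c k := by
    intro k
    rw [sec_coll]
    split_ifs with hk
    · have h1 : (⟨p.2.val, _⟩ : Fin n) = a := Fin.ext rfl
      have h2 : k = b := Fin.ext hk
      rw [h1, h2, hab]
    · rfl
  set σ₀ : Fin (n-1) → Fin (n-1) := c ∘ sec p with hσ₀
  have hσ₀surj : Function.Surjective σ₀ := by
    intro y
    obtain ⟨k, hk⟩ := hc y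
    exact ⟨coll p k, by rw [hσ₀]; simp only [Function.comp_apply]; rw [hcomp k, hk]⟩
  have hσ₀bij : Function.Bijective σ₀ := (Finite.surjective_iff_bijective).1 hσ₀surj
  refine ⟨(p, Equiv.ofBijective σ₀ hσ₀bij), ?_⟩
  apply Subtype.ext
  funext k
  show σ₀ (coll p k) = c k
  exact hcomp k


lemma card_surjections (n : ℕ) (hn : 1 ≤ n) :
    Nat.card {c : Fin n → Fin (n-1) // Function.Surjective c}
      = (n * (n-1) / 2) * (n-1).factorial := by
  rw [← Nat.card_eq_of_bijective (surjMap n) ⟨surjMap_inj n, surjMap_surj n hn⟩]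
  rw [Nat.card_eq_fintype_card, Fintype.card_prod, Fintype.card_sigma]
  simp only [Fintype.card_fin]
  rw [Fintype.card_equiv (Equiv.refl _), Fin.sum_univ_eq_sum_range (fun i => i) n,
    Finset.sum_range_id, Fintype.card_fin]

lemma no_rev_fixed {n : ℕ} (hn : 4 ≤ n) (c : Fin n → Fin (n-1))
    (hc : Function.Surjective c) : ¬ ∀ v, c (Fin.rev v) = c v := by
  intro h
  have hd : Function.Surjective (fun t : Fin ((n+1)/2) => c ⟨t.val, by omega⟩) := by
    intro y
    obtain ⟨v, hv⟩ := hc y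
    by_cases hv2 : 2 * v.val ≤ n - 1
    · exact ⟨⟨v.val, by omega⟩, by simpa [Fin.ext_iff] using hv⟩
    · have hrv := v.isLt
      refine ⟨⟨n - 1 - v.val, by omega⟩, ?_⟩
      have : (⟨n - 1 - v.val, by omega⟩ : Fin n) = Fin.rev v := by
        apply Fin.ext; rw [Fin.val_rev]
        show n - 1 - v.val = n - (v.val + 1); omega
      simp only [this, h v, hv]
  have := Fintype.card_le_of_surjective _ hd
  simp only [Fintype.card_fin] at this
  omega

lemma surj_dist {n : ℕ} (hn : 4 ≤ n) (c : Fin n → Fin (n-1))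
    (hc : Function.Surjective c) : IsDistinguishing (pathGraph n) c := by
  intro α hα v
  rcases aut_cases (by omega) α with h | h
  · exact h v
  · exact absurd (fun v => by rw [← h v]; exact hα v) (no_rev_fixed hn c hc)


theorem phi_pathGraph_pred (n : ℕ) (hn : 4 ≤ n) :
    phi (pathGraph n) (n - 1) = (n - 1) * n.factorial / 4 := by
  classical
  set S := {c : Fin n → Fin (n-1) // IsDistinguishing (pathGraph n) c ∧ Function.Surjective c}
    with hS
  set r : S → S → Prop := fun c₁ c₂ => ∃ α : pathGraph n ≃g pathGraph n,
    ∀ v, c₁.1 v = c₂.1 (α v) with hr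
  have hphi : phi (pathGraph n) (n-1) = Nat.card (Quot r) := rfl
  -- r is an equivalence
  have hrefl : ∀ c : S, r c c := fun c => ⟨Iso.refl, fun v => rfl⟩
  have hequiv : Equivalence r := by
    constructor
    · exact hrefl
    · rintro c₁ c₂ ⟨α, h⟩
      exact ⟨α.symm, fun v => by
        have := h (α.symm v)
        rw [RelIso.apply_symm_apply] at this
        exact this.symm⟩
    · rintro c₁ c₂ c₃ ⟨α, h⟩ ⟨β, g⟩
      exact ⟨α.trans β, fun v => by rw [h v, g (α v)]; rfl⟩
  -- the involution
  have hmem : ∀ c : S, IsDistinguishing (pathGraph n) (fun v => c.1 (Fin.rev v)) ∧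
      Function.Surjective (fun v => c.1 (Fin.rev v)) := by
    intro c
    have hsurj : Function.Surjective (fun v => c.1 (Fin.rev v)) := by
      intro y; obtain ⟨v, hv⟩ := c.2.2 y
      exact ⟨Fin.rev v, by show c.1 (Fin.rev (Fin.rev v)) = y; rwa [Fin.rev_rev]⟩
    exact ⟨surj_dist hn _ hsurj, hsurj⟩
  set t : S → S := fun c => ⟨fun v => c.1 (Fin.rev v), hmem c⟩ with htdef
  have hrchar : ∀ c₁ c₂ : S, r c₁ c₂ ↔ (c₁ = c₂ ∨ c₁ = t c₂) := by
    intro c₁ c₂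
    constructor
    · rintro ⟨α, h⟩
      rcases aut_cases (show 2 ≤ n by omega) α with hid | hrev
      · left; exact Subtype.ext (funext fun v => by rw [h v, hid v])
      · right; exact Subtype.ext (funext fun v => by rw [h v, hrev v])
    · rintro (rfl | rfl)
      · exact hrefl c₁
      · exact ⟨pgRev n, fun v => by simp [htdef]⟩
  have htne : ∀ c : S, t c ≠ c := by
    intro c hceq
    exact no_rev_fixed hn c.1 c.2.2
      (fun v => congrFun (congrArg Subtype.val hceq) v)
  -- count: fibers of Quot.mk have size 2
  haveI : Fintype S := Fintype.ofFinite _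
  haveI : Fintype (Quot r) := Fintype.ofFinite _
  haveI fibFT : ∀ q : Quot r, Fintype {x : S // Quot.mk r x = q} :=
    fun q => Fintype.ofFinite _
  have hfib : ∀ q : Quot r, Nat.card {x : S // Quot.mk r x = q} = 2 := by
    intro q
    induction q using Quot.ind with
    | _ c₀ =>
      have hiff : ∀ x : S, Quot.mk r x = Quot.mk r c₀ ↔ x ∈ ({c₀, t c₀} : Set S) := by
        intro x
        rw [Quot.eq, hequiv.eqvGen_iff, hrchar]
        simp [Set.mem_insert_iff]
      have he : {x : S // Quot.mk r x = Quot.mk r c₀} ≃ ({c₀, t c₀} : Set S) :=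
        Equiv.subtypeEquivRight hiff
      rw [Nat.card_congr he, Nat.card_coe_set_eq, Set.ncard_pair (htne c₀).symm]
  have hcardS : Nat.card S = 2 * Nat.card (Quot r) := by
    rw [Nat.card_eq_fintype_card, Nat.card_eq_fintype_card,
      ← Fintype.card_congr (Equiv.sigmaFiberEquiv (Quot.mk r)),
      Fintype.card_sigma]
    have : ∀ q : Quot r, Fintype.card {x : S // Quot.mk r x = q} = 2 := by
      intro q; rw [← Nat.card_eq_fintype_card, hfib q]
    simp [this, Finset.sum_const, mul_comm]
  -- S ≃ surjections
  have hSsurj : Nat.card S = (n * (n-1) / 2) * (n-1).factorial := by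
    rw [← card_surjections n (by omega)]
    apply Nat.card_congr
    exact Equiv.subtypeEquivRight (fun c =>
      ⟨And.right, fun h => ⟨surj_dist hn c h, h⟩⟩)
  rw [hphi]
  have h2Q : 2 * Nat.card (Quot r) = (n * (n-1) / 2) * (n-1).factorial := by
    rw [← hcardS, hSsurj]
  have heven : 2 * (n * (n-1) / 2) = n * (n-1) := by
    have : Even ((n-1) * (n - 1 + 1)) := Nat.even_mul_succ_self (n-1)
    have hn1 : n - 1 + 1 = n := by omega
    rw [hn1, mul_comm] at this
    obtain ⟨a, ha⟩ := this
    omega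
  have h4Q : 4 * Nat.card (Quot r) = (n - 1) * n.factorial := by
    have hfac : n.factorial = n * (n-1).factorial := by
      conv_lhs => rw [show n = (n-1) + 1 by omega]
      rw [Nat.factorial_succ]
      congr 1; omega
    calc 4 * Nat.card (Quot r) = 2 * (2 * Nat.card (Quot r)) := by ring
    _ = 2 * ((n * (n-1) / 2) * (n-1).factorial) := by rw [h2Q]
    _ = (2 * (n * (n-1) / 2)) * (n-1).factorial := by ring
    _ = n * (n-1) * (n-1).factorial := by rw [heven]
    _ = (n - 1) * (n * (n-1).factorial) := by ring
    _ = (n - 1) * n.factorial := by rw [← hfac]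
  omega
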